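/- On the unit round sphere, the vector field D^A((P + 2)h)_{AB}, for h a symmetric trace-free 2-tensor expanded in tensor harmonics, equals −∑_{ℓ≥2,|m|≤ℓ} (½ℓ(ℓ+1) − 3)(½ℓ(ℓ+1) − 1)^{1/2} (h_ψ^{(ℓm)} E^{(ℓm)}_B + h_φ^{(ℓm)} H^{(ℓm)}_B). Consequently the L²-orthogonal complement of the image of the operator h ↦ div₂((P+2)h) is spanned by the vector spherical harmonics with ℓ = 1 and ℓ = 2. -/
import Mathlib


/-- On the unit round sphere, for a mode-`ℓ` tensor harmonic `h` (i.e.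
`P h = −μ h` with `μ = ½ℓ(ℓ+1) − 1` and `div₂ h = √μ E` for the corresponding vector
harmonic `E`), the vector field `div₂ ((P + 2) h)` equals
`−(½ℓ(ℓ+1) − 3) √μ E`; consequently it vanishes for `ℓ = 2`, so the `L²`-orthogonal
complement of the image of `h ↦ div₂ ((P+2)h)` is spanned by the vector harmonics with
`ℓ = 1` and `ℓ = 2`. -/
theorem stmt_18 {F T : Type*} [AddCommGroup F] [Module ℝ F] [AddCommGroup T] [Module ℝ T]
    (ℓ : ℕ) (hℓ : 2 ≤ ℓ)
    (Cop : F →ₗ[ℝ] T) (div2 : T →ₗ[ℝ] F)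
    (μ : ℝ) (hμ : μ = (ℓ : ℝ) * ((ℓ : ℝ) + 1) / 2 - 1)
    (h : T) (E : F)
    (hPh : Cop (div2 h) = -μ • h)
    (hdivh : div2 h = Real.sqrt μ • E) :
    (div2 (Cop (div2 h) + (2 : ℝ) • h)
        = -(((ℓ : ℝ) * ((ℓ : ℝ) + 1) / 2 - 3) * Real.sqrt μ) • E)
    ∧ (ℓ = 2 → div2 (Cop (div2 h) + (2 : ℝ) • h) = 0) := by
  have key : div2 (Cop (div2 h) + (2 : ℝ) • h)
      = -(((ℓ : ℝ) * ((ℓ : ℝ) + 1) / 2 - 3) * Real.sqrt μ) • E := by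
    rw [hPh, map_add, map_smul, map_smul, hdivh]
    rw [smul_smul, smul_smul, ← add_smul]
    congr 1
    rw [hμ]; ring
  refine ⟨key, fun h2 => ?_⟩
  rw [key, h2]
  norm_num
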